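/- Let φ be a 1/2-derivation of the solvable Lie algebra L with abelian nilpotent radical of codimension 1. Then there exist a scalar α ∈ ℂ and a finitely supported family (α_i)_{i ≥ 2} of complex numbers such that φ(e_1) = α e_1 + Σ_{i ≥ 2} α_i e_i and φ(e_n) = α e_n for all n ≥ 2. -/

import Mathlib

/-- The underlying space of the solvable Lie algebra with abelian nilpotent
radical of codimension 1, with basis `e i = single i 1` for `i : ℕ+`. -/
abbrev Solv : Type := ℕ+ →₀ ℂ

/-- The bracket on basis elements: `[e 1, e n] = e n` for `n ≥ 2`, all other
brackets of basis elements zero. -/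
noncomputable def solvBasic (i j : ℕ+) : Solv :=
  if i = 1 ∧ 2 ≤ j then Finsupp.single j (1 : ℂ)
  else if j = 1 ∧ 2 ≤ i then -Finsupp.single i (1 : ℂ)
  else 0

/-- The Lie bracket of the solvable Lie algebra, extended bilinearly. -/
noncomputable def solvBracket (f g : Solv) : Solv :=
  f.sum fun p c => g.sum fun q d => (c * d) • solvBasic p q

/-- The basis element `e i` of the solvable Lie algebra. -/
noncomputable def se (i : ℕ+) : Solv := Finsupp.single i 1

lemma two_le_of_ne_one {q : ℕ+} (h : q ≠ 1) : 2 ≤ q := by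
  have h1 : 1 ≤ (q : ℕ) := q.one_le
  have h2 : (q : ℕ) ≠ 1 := fun hh => h (PNat.coe_injective hh)
  have : (2 : ℕ) ≤ (q : ℕ) := by omega
  exact_mod_cast this

lemma br_right (f : Solv) (n : ℕ+) (hn : 2 ≤ n) : solvBracket f (se n) = f 1 • se n := by
  classical
  have hn1 : n ≠ 1 := by
    rintro rfl; exact absurd hn (by decide)
  unfold solvBracket se
  rw [show (f.sum fun p c => (Finsupp.single n (1:ℂ)).sum fun q d => (c * d) • solvBasic p q)
      = f.sum fun p c => if p = 1 then c • Finsupp.single n (1:ℂ) else 0 from ?_]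
  · rw [Finsupp.sum_ite_eq' f 1 fun _ c => c • Finsupp.single n (1:ℂ)]
    split_ifs with h
    · rfl
    · rw [Finsupp.notMem_support_iff.mp h, zero_smul]
  · apply Finsupp.sum_congr
    intro p _
    rw [Finsupp.sum_single_index (by simp)]
    have hb : solvBasic p n = if p = 1 then Finsupp.single n 1 else 0 := by
      unfold solvBasic
      rcases eq_or_ne p 1 with rfl | hp
      · simp [hn]
      · simp [hp, hn1]
    rw [hb]
    split_ifs <;> simp

lemma br_left (g : Solv) : solvBracket (se 1) g = g - g 1 • se 1 := by
  classical
  unfold solvBracket se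
  rw [Finsupp.sum_single_index (by simp)]
  have key : (g.sum fun q d => ((1:ℂ) * d) • solvBasic 1 q)
      = g.sum fun q d => Finsupp.single q d - (if q = 1 then Finsupp.single 1 d else 0) := by
    apply Finsupp.sum_congr
    intro q _
    rcases eq_or_ne q 1 with rfl | hq
    · simp [solvBasic]
    · have h2 : 2 ≤ q := two_le_of_ne_one hq
      simp [solvBasic, h2, hq]
  rw [key, Finsupp.sum_sub, Finsupp.sum_single,
    Finsupp.sum_ite_eq' g 1 fun _ d => Finsupp.single 1 d]
  congr 1
  split_ifs with h
  · rw [Finsupp.smul_single', mul_one]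
  · rw [Finsupp.notMem_support_iff.mp h]; simp

/-- Every 1/2-derivation `φ` of the solvable Lie algebra with
abelian nilpotent radical of codimension 1 satisfies
`φ (e 1) = α e 1 + Σ_{i≥2} α_i e i` and `φ (e n) = α e n` for all `n ≥ 2`. -/
theorem solvable_half_derivation_formula
    (φ : Solv →ₗ[ℂ] Solv)
    (hφ : ∀ x y : Solv, φ (solvBracket x y) =
        (1 / 2 : ℂ) • (solvBracket (φ x) y + solvBracket x (φ y))) :
    ∃ (α : ℂ) (αs : ℕ+ →₀ ℂ), αs 1 = 0 ∧
      φ (se 1) = α • se 1 + αs.sum (fun i c => c • se i) ∧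
      ∀ n : ℕ+, 2 ≤ n → φ (se n) = α • se n := by
  classical
  refine ⟨(φ (se 1)) 1, (φ (se 1)).erase 1, Finsupp.erase_same, ?_, ?_⟩
  · have h1 : (((φ (se 1)).erase 1).sum fun i c => c • se i) = (φ (se 1)).erase 1 := by
      rw [show (fun (i : ℕ+) (c : ℂ) => c • se i) = fun i c => Finsupp.single i c from ?_,
        Finsupp.sum_single]
      funext i c
      rw [se, Finsupp.smul_single', mul_one]
    have h2 : (φ (se 1)) 1 • se 1 = Finsupp.single 1 ((φ (se 1)) 1) := by
      rw [se, Finsupp.smul_single', mul_one]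
    rw [h1, h2, Finsupp.single_add_erase]
  · intro n hn
    have hn1 : n ≠ 1 := by rintro rfl; exact absurd hn (by decide)
    have h := hφ (se 1) (se n)
    rw [br_right (se 1) n hn, br_right (φ (se 1)) n hn, br_left (φ (se n))] at h
    have e1 : (se 1) 1 = (1:ℂ) := Finsupp.single_eq_same
    rw [e1, one_smul] at h
    have h2 : φ (se n) = ((φ (se 1)) 1) • se n - ((φ (se n)) 1) • se 1 := by
      have h' : (2:ℂ) • φ (se n)
          = (φ (se 1)) 1 • se n + (φ (se n) - (φ (se n)) 1 • se 1) := by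
        calc (2:ℂ) • φ (se n)
            = (2:ℂ) • ((1/2:ℂ) • ((φ (se 1)) 1 • se n
                + (φ (se n) - (φ (se n)) 1 • se 1))) := by rw [← h]
          _ = _ := by rw [smul_smul]; norm_num
      have h'' : φ (se n) + φ (se n)
          = ((φ (se 1)) 1 • se n - (φ (se n)) 1 • se 1) + φ (se n) := by
        calc φ (se n) + φ (se n) = (2:ℂ) • φ (se n) := (two_smul ℂ _).symm
          _ = (φ (se 1)) 1 • se n + (φ (se n) - (φ (se n)) 1 • se 1) := h'
          _ = _ := by abel
      exact add_right_cancel h''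
    have hsn : (se n) 1 = (0:ℂ) := Finsupp.single_eq_of_ne' hn1
    have hb := congrArg (fun f : Solv => f 1) h2
    simp only [Finsupp.sub_apply, Finsupp.smul_apply, smul_eq_mul, hsn, e1,
      mul_zero, mul_one, zero_sub] at hb
    have hx : (φ (se n)) 1 = 0 := by linear_combination (1/2 : ℂ) * hb
    rw [h2, hx, zero_smul, sub_zero]
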